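/- Let μ be a Borel probability measure on Ω and assume the pair (μ,K) is non-degenerate: for every n ≥ 3, the set of tuples (x_1,…,x_n) ∈ Ω^n for which S'(x_1) = S'(x_2) has μ^{⊗n}-measure zero, where S'(x) = K(x,x) − v'(x)ᵀ(G')⁻¹v'(x) is formed from the points x_3,…,x_n (with the convention S' ≡ 0 if the Gram matrix G' of x_3,…,x_n is singular). Set f(ε) = inf_{x∈Ω} μ({y ∈ Ω : ϱ(x,y) ≤ ε}). Then for every 1 ≤ t ≤ N and ε > 0, the μ^{⊗N}-measure of the set of samples (z_1,…,z_N) ∈ Ω^N for which there exist pairwise distinct indices i_1,…,i_t ∈ {1,…,N} such that, writing a_u = z_{i_u}: (i) for each 1 ≤ u < t the Gram matrix of (a_1,…,a_u) is invertible; (ii) for every u ∈ {1,…,t} and every j ∈ {1,…,N}, S_{u−1}(a_u) ≥ S_{u−1}(z_j), where S_{u−1} is formed from a_1,…,a_{u−1} (S_0(x) = K(x,x)); and (iii) √(S_{t−1}(a_t)) < w_K(t−1) − ε, is at most C(N,t) · e^{−f(ε)(N−t)}, where C(N,t) is the binomial coefficient N choose t. (This event contains the event that the greedy algorithm on the sample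 outputs w_{t−1} < w_K(t−1) − ε.) -/

import Mathlib

open MeasureTheory Filter
open scoped ENNReal

noncomputable section

/-- The Kolmogorov `n`-width of the image of `Ω` under `Φ` in the Hilbert space `H`. -/
def kolmWidth {E H : Type*} [NormedAddCommGroup H] [InnerProductSpace ℝ H]
    (Ω : Set E) (Φ : E → H) (n : ℕ) : ℝ :=
  ⨅ L : {L : Submodule ℝ H // ∃ s : Finset H, s.card ≤ n ∧ L = Submodule.span ℝ (s : Set H)},
    ⨆ x : Ω, Metric.infDist (Φ (x : E)) (L.1 : Set H)

/-- The Gram matrix `[K(x_i,x_j)]` of the points `x : Fin n → E`. -/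
def gramM {E H : Type*} [NormedAddCommGroup H] [InnerProductSpace ℝ H]
    (Φ : E → H) {n : ℕ} (x : Fin n → E) : Matrix (Fin n) (Fin n) ℝ :=
  Matrix.of fun i j => (inner ℝ (Φ (x i)) (Φ (x j)) : ℝ)

/-- The vector `v(y) = (K(x_1,y), …, K(x_n,y))`. -/
def kvec {E H : Type*} [NormedAddCommGroup H] [InnerProductSpace ℝ H]
    (Φ : E → H) {n : ℕ} (x : Fin n → E) (y : E) : Fin n → ℝ :=
  fun i => (inner ℝ (Φ (x i)) (Φ y) : ℝ)

open scoped Classical in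
/-- `S_u(y) = K(y,y) − v(y)ᵀ G⁻¹ v(y)` when the Gram matrix `G` of the `u` base points
is invertible, with the convention `S_u ≡ 0` when `G` is singular (and
`S_0(y) = K(y,y)`, the Gram matrix of zero points being the invertible empty matrix). -/
def Sconv {E H : Type*} [NormedAddCommGroup H] [InnerProductSpace ℝ H]
    (Φ : E → H) {n : ℕ} (x : Fin n → E) (y : E) : ℝ :=
  if IsUnit (gramM Φ x).det then
    (inner ℝ (Φ y) (Φ y) : ℝ) -
      dotProduct (kvec Φ x y) (Matrix.mulVec (gramM Φ x)⁻¹ (kvec Φ x y))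
  else 0

lemma infDist_le_sqrt_sconv {E H : Type*} [NormedAddCommGroup H] [InnerProductSpace ℝ H]
    (Φ : E → H) {n : ℕ} (p : Fin n → E) (hdet : IsUnit (gramM Φ p).det) (y : E) :
    Metric.infDist (Φ y) ((Submodule.span ℝ (Set.range fun i => Φ (p i)) : Submodule ℝ H) : Set H)
      ≤ Real.sqrt (Sconv Φ p y) := by
  classical
  set G := gramM Φ p with hG
  set v := kvec Φ p y with hv
  set c := G⁻¹.mulVec v with hc
  set q : H := ∑ i, c i • Φ (p i) with hq
  have hqmem : q ∈ Submodule.span ℝ (Set.range fun i => Φ (p i)) :=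
    Submodule.sum_mem _ fun i _ => Submodule.smul_mem _ _ (Submodule.subset_span ⟨i, rfl⟩)
  have hGc : G.mulVec c = v := by
    rw [hc, Matrix.mulVec_mulVec, Matrix.mul_nonsing_inv _ hdet, Matrix.one_mulVec]
  have h1 : (inner ℝ (Φ y) q : ℝ) = dotProduct c v := by
    rw [hq, inner_sum]
    simp only [real_inner_smul_right, dotProduct]
    refine Finset.sum_congr rfl fun i _ => ?_
    rw [hv, kvec, real_inner_comm]
  have h2 : (inner ℝ q q : ℝ) = dotProduct c v := by
    rw [← hGc]
    rw [hq, sum_inner]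
    simp only [real_inner_smul_left, inner_sum, real_inner_smul_right,
      dotProduct, Matrix.mulVec, Finset.mul_sum]
    refine Finset.sum_congr rfl fun i _ => Finset.sum_congr rfl fun j _ => ?_
    have : G i j = (inner ℝ (Φ (p i)) (Φ (p j)) : ℝ) := rfl
    rw [this]; ring
  have hS : Sconv Φ p y = ‖Φ y - q‖ ^ 2 := by
    rw [Sconv, if_pos hdet, norm_sub_sq_real, ← hG, ← hv, ← hc, h1,
      real_inner_self_eq_norm_sq, ← real_inner_self_eq_norm_sq q, h2,
      dotProduct_comm v c]
    ring
  rw [hS, Real.sqrt_sq (norm_nonneg _)]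
  calc Metric.infDist (Φ y) _ ≤ dist (Φ y) q := Metric.infDist_le_dist_of_mem hqmem
  _ = ‖Φ y - q‖ := dist_eq_norm _ _

lemma three_pow_le_choose (j : ℕ) : 3 ^ j ≤ Nat.choose (2 * j + 2) j := by
  induction j with
  | zero => simp
  | succ j ih =>
    have pascal : Nat.choose (2 * j + 4) (j + 1)
        = Nat.choose (2 * j + 3) j + Nat.choose (2 * j + 3) (j + 1) := by
      have h := Nat.choose_succ_succ (2 * j + 3) j
      simpa [Nat.succ_eq_add_one] using h
    have h1 : Nat.choose (2 * j + 2) j ≤ Nat.choose (2 * j + 3) j :=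
      Nat.choose_le_choose j (by omega)
    have h2 : 2 * Nat.choose (2 * j + 2) j ≤ Nat.choose (2 * j + 3) (j + 1) := by
      have key : (2 * j + 3) * Nat.choose (2 * j + 2) j
          = Nat.choose (2 * j + 3) (j + 1) * (j + 1) := by
        have := Nat.add_one_mul_choose_eq (2 * j + 2) j
        simpa using this
      nlinarith [Nat.choose_pos (show j ≤ 2*j+2 by omega)]
    have e1 : 2 * (j + 1) + 2 = 2 * j + 4 := by ring
    rw [e1, pascal]
    have h4 : 3 ^ j ≤ Nat.choose (2*j+3) j := le_trans ih h1
    have h5 : 2 * 3 ^ j ≤ Nat.choose (2*j+3) (j+1) :=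
      le_trans (Nat.mul_le_mul_left 2 ih) h2
    have h6 : 3 ^ (j+1) = 3 ^ j + 2 * 3 ^ j := by ring
    omega

set_option maxHeartbeats 2000000 in
lemma keyLemma {d : ℕ} {H : Type*} [NormedAddCommGroup H] [InnerProductSpace ℝ H]
    (Ω : Set (EuclideanSpace ℝ (Fin d))) (hΩ : IsCompact Ω) (hne : Ω.Nonempty)
    (Φ : EuclideanSpace ℝ (Fin d) → H) (hΦ : ContinuousOn Φ Ω)
    (μ : Measure (EuclideanSpace ℝ (Fin d))) [IsProbabilityMeasure μ]
    (k : ℕ) (ε C : ℝ) (hC : C + ε ≤ kolmWidth Ω Φ k)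
    (N : ℕ) (r : Finset (Fin N)) (hr : r.card = k) :
    ∃ M : Set (Fin N → EuclideanSpace ℝ (Fin d)), MeasurableSet M ∧
      Measure.pi (fun _ : Fin N => μ) M ≤
        (1 - ENNReal.ofReal (⨅ x : Ω,
          (μ {y | y ∈ Ω ∧ ‖Φ (x : EuclideanSpace ℝ (Fin d)) - Φ y‖ ≤ ε}).toReal)) ^ (N - k) ∧
      ∀ z : Fin N → EuclideanSpace ℝ (Fin d), (∀ j, z j ∈ Ω) →
        (∀ j : Fin N, Metric.infDist (Φ (z j))
            ((Submodule.span ℝ ((fun i => Φ (z i)) '' (r : Set (Fin N)))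
              : Submodule ℝ H) : Set H) < C) →
        z ∈ M := by
  classical
  set F := ⨅ x : Ω, (μ {y | y ∈ Ω ∧ ‖Φ (x : EuclideanSpace ℝ (Fin d)) - Φ y‖ ≤ ε}).toReal
    with hFdef
  have hΩm : MeasurableSet Ω := hΩ.isClosed.measurableSet
  haveI : Nonempty Ω := hne.to_subtype
  set S : Set (({i : Fin N // i ∈ r} → EuclideanSpace ℝ (Fin d)) × EuclideanSpace ℝ (Fin d)) := (Set.univ.pi fun _ => Ω) ×ˢ Ω with hSdef
  have hSmeas : MeasurableSet S := (MeasurableSet.univ_pi fun _ => hΩm).prod hΩm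
  set L : ({i : Fin N // i ∈ r} → EuclideanSpace ℝ (Fin d)) → Submodule ℝ H := fun w => Submodule.span ℝ (Set.range fun i => Φ (w i)) with hL
  -- relatively open pieces
  have hVex : ∀ c : {i : Fin N // i ∈ r} → ℝ, ∃ u : Set (({i : Fin N // i ∈ r} → EuclideanSpace ℝ (Fin d)) × EuclideanSpace ℝ (Fin d)),
      IsOpen u ∧
      (fun p : ({i : Fin N // i ∈ r} → EuclideanSpace ℝ (Fin d)) × EuclideanSpace ℝ (Fin d) => ‖Φ p.2 - ∑ i, c i • Φ (p.1 i)‖) ⁻¹' Set.Iio C ∩ S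
        = u ∩ S := by
    intro c
    have hcont : ContinuousOn
        (fun p : ({i : Fin N // i ∈ r} → EuclideanSpace ℝ (Fin d)) × EuclideanSpace ℝ (Fin d) => ‖Φ p.2 - ∑ i, c i • Φ (p.1 i)‖) S := by
      apply ContinuousOn.norm
      apply ContinuousOn.sub
      · exact hΦ.comp continuous_snd.continuousOn (fun p hp => hp.2)
      · apply continuousOn_finset_sum
        intro i _
        exact (hΦ.comp ((continuous_apply i).comp continuous_fst).continuousOn
          (fun p hp => hp.1 i (Set.mem_univ i))).const_smul (c i)
    exact (_root_.continuousOn_iff'.mp hcont) _ isOpen_Iio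
  choose u huo hus using hVex
  set V := ⋃ c, u c with hV
  have hVo : IsOpen V := isOpen_iUnion huo
  have hVS : ∀ p ∈ S, (p ∈ V ↔ Metric.infDist (Φ p.2) ((L p.1 : Submodule ℝ H) : Set H) < C) := by
    intro p hp
    constructor
    · rintro ⟨_, ⟨c, rfl⟩, hpu⟩
      have hmem2 : p ∈ (fun p : ({i : Fin N // i ∈ r} → EuclideanSpace ℝ (Fin d)) × EuclideanSpace ℝ (Fin d) =>
          ‖Φ p.2 - ∑ i, c i • Φ (p.1 i)‖) ⁻¹' Set.Iio C ∩ S := by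
        rw [hus c]; exact ⟨hpu, hp⟩
      have hmem : (∑ i, c i • Φ (p.1 i)) ∈ L p.1 :=
        Submodule.sum_mem _ fun i _ => Submodule.smul_mem _ _ (Submodule.subset_span ⟨i, rfl⟩)
      calc Metric.infDist (Φ p.2) ((L p.1 : Submodule ℝ H) : Set H)
          ≤ dist (Φ p.2) (∑ i, c i • Φ (p.1 i)) := Metric.infDist_le_dist_of_mem hmem
      _ < C := by rw [dist_eq_norm]; exact hmem2.1
    · intro hlt
      have hLne : ((L p.1 : Submodule ℝ H) : Set H).Nonempty := ⟨0, Submodule.zero_mem _⟩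
      obtain ⟨q, hqL, hqd⟩ := (Metric.infDist_lt_iff hLne).mp hlt
      obtain ⟨c, rfl⟩ := (Submodule.mem_span_range_iff_exists_fun ℝ).mp hqL
      refine Set.mem_iUnion.mpr ⟨c, ?_⟩
      have hmem2 : p ∈ u c ∩ S := by
        rw [← hus c]
        exact ⟨by simpa [dist_eq_norm] using hqd, hp⟩
      exact hmem2.1
  set R := V ∩ S with hR
  have hRmeas : MeasurableSet R := hVo.measurableSet.inter hSmeas
  -- slice bound
  have hslice : ∀ w : {i : Fin N // i ∈ r} → EuclideanSpace ℝ (Fin d), μ {y | (w, y) ∈ R} ≤ 1 - ENNReal.ofReal F := by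
    intro w
    by_cases hw : ∀ i, w i ∈ Ω
    · have hLco : ContinuousOn (fun x => Metric.infDist (Φ x) ((L w : Submodule ℝ H) : Set H)) Ω :=
        (Metric.continuous_infDist_pt _).comp_continuousOn hΦ
      obtain ⟨xs, hxsΩ, hxsmax⟩ := hΩ.exists_isMaxOn hne hLco
      have hwk : kolmWidth Ω Φ k ≤ Metric.infDist (Φ xs) ((L w : Submodule ℝ H) : Set H) := by
        have hbdd : BddBelow (Set.range fun
            (LL : {L : Submodule ℝ H // ∃ s : Finset H, s.card ≤ k
              ∧ L = Submodule.span ℝ (s : Set H)}) =>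
            ⨆ x : Ω, Metric.infDist (Φ (x : EuclideanSpace ℝ (Fin d))) (LL.1 : Set H)) := by
          refine ⟨0, ?_⟩; rintro _ ⟨LL, rfl⟩
          exact Real.iSup_nonneg fun x => Metric.infDist_nonneg
        have h1 : kolmWidth Ω Φ k
            ≤ ⨆ x : Ω, Metric.infDist (Φ (x : EuclideanSpace ℝ (Fin d)))
                ((L w : Submodule ℝ H) : Set H) := by
          refine ciInf_le hbdd ⟨L w, Finset.univ.image fun i => Φ (w i), ?_, ?_⟩
          · refine le_trans Finset.card_image_le ?_
            simp [hr]
          · rw [hL]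
            congr 1
            rw [Finset.coe_image, Finset.coe_univ, Set.image_univ]
        refine h1.trans (ciSup_le fun x => hxsmax x.2)
      have hxsC : C + ε ≤ Metric.infDist (Φ xs) ((L w : Submodule ℝ H) : Set H) :=
        le_trans hC hwk
      set B := {y | y ∈ Ω ∧ ‖Φ xs - Φ y‖ ≤ ε} with hB
      have hBclosed : IsClosed B := by
        have : B = Ω ∩ (fun y => ‖Φ xs - Φ y‖) ⁻¹' Set.Iic ε := by
          ext y; exact Iff.rfl
        rw [this]
        exact ContinuousOn.preimage_isClosed_of_isClosed
          ((continuousOn_const.sub hΦ).norm) hΩ.isClosed isClosed_Iic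
      have hBmeas : MeasurableSet B := hBclosed.measurableSet
      have hsub : {y | (w, y) ∈ R} ⊆ Bᶜ := by
        intro y hy
        rcases hy with ⟨hyV, hyS⟩
        intro hyB
        have hylt : Metric.infDist (Φ y) ((L w : Submodule ℝ H) : Set H) < C :=
          (hVS (w, y) hyS).mp hyV
        have htri : Metric.infDist (Φ xs) ((L w : Submodule ℝ H) : Set H)
            ≤ Metric.infDist (Φ y) ((L w : Submodule ℝ H) : Set H) + dist (Φ xs) (Φ y) :=
          Metric.infDist_le_infDist_add_dist
        rw [dist_eq_norm] at htri
        have := hyB.2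
        linarith
      have hμB : ENNReal.ofReal F ≤ μ B := by
        have h1 : F ≤ (μ B).toReal := by
          have hbb : BddBelow (Set.range fun x : Ω =>
              (μ {y | y ∈ Ω ∧ ‖Φ (x : EuclideanSpace ℝ (Fin d)) - Φ y‖ ≤ ε}).toReal) := by
            refine ⟨0, ?_⟩
            rintro _ ⟨x, rfl⟩; exact ENNReal.toReal_nonneg
          exact ciInf_le hbb (⟨xs, hxsΩ⟩ : Ω)
        calc ENNReal.ofReal F ≤ ENNReal.ofReal (μ B).toReal := ENNReal.ofReal_le_ofReal h1
        _ = μ B := ENNReal.ofReal_toReal (measure_ne_top μ B)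
      calc μ {y | (w, y) ∈ R} ≤ μ Bᶜ := measure_mono hsub
      _ = 1 - μ B := prob_compl_eq_one_sub hBmeas
      _ ≤ 1 - ENNReal.ofReal F := tsub_le_tsub_left hμB 1
    · have hempty : {y | (w, y) ∈ R} = ∅ := by
        ext y
        simp only [Set.mem_setOf_eq, Set.mem_empty_iff_false, iff_false]
        rintro ⟨_, hyS, _⟩
        exact hw fun i => hyS i (Set.mem_univ i)
      rw [hempty]; simp
  -- the measurable superset
  set e := MeasurableEquiv.piEquivPiSubtypeProd (fun _ : Fin N => EuclideanSpace ℝ (Fin d))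
    (fun i => i ∈ r) with he
  set Mt : Set (({i : Fin N // i ∈ r} → EuclideanSpace ℝ (Fin d)) × ({i : Fin N // ¬ i ∈ r} → EuclideanSpace ℝ (Fin d))) :=
    {p | ∀ j : {i : Fin N // ¬ i ∈ r}, (p.1, p.2 j) ∈ R} with hMt
  have hMtmeas : MeasurableSet Mt := by
    have : Mt = ⋂ j : {i : Fin N // ¬ i ∈ r},
        (fun p : ({i : Fin N // i ∈ r} → EuclideanSpace ℝ (Fin d)) × ({i : Fin N // ¬ i ∈ r} → EuclideanSpace ℝ (Fin d)) => (p.1, p.2 j)) ⁻¹' R := by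
      ext p; simp [hMt]
    rw [this]
    exact MeasurableSet.iInter fun j =>
      (measurable_fst.prodMk ((measurable_pi_apply j).comp measurable_snd)) hRmeas
  refine ⟨e ⁻¹' Mt, e.measurable hMtmeas, ?_, ?_⟩
  · have hpres := measurePreserving_piEquivPiSubtypeProd (fun _ : Fin N => μ)
      (fun i : Fin N => i ∈ r)
    rw [hpres.measure_preimage hMtmeas.nullMeasurableSet]
    rw [Measure.prod_apply hMtmeas]
    have hsl : ∀ w : {i : Fin N // i ∈ r} → EuclideanSpace ℝ (Fin d), Measure.pi (fun _ : {i : Fin N // ¬ i ∈ r} => μ) (Prod.mk w ⁻¹' Mt)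
        ≤ (1 - ENNReal.ofReal F) ^ (N - k) := by
      intro w
      have hpre : Prod.mk w ⁻¹' Mt
          = Set.univ.pi (fun _ : {i : Fin N // ¬ i ∈ r} => {y | (w, y) ∈ R}) := by
        ext v
        simp [hMt, Set.mem_univ_pi]
      rw [hpre, Measure.pi_pi]
      have hcard : Fintype.card {i : Fin N // ¬ i ∈ r} = N - k := by
        rw [Fintype.card_subtype_compl]
        simp [hr]
      calc ∏ _j : {i : Fin N // ¬ i ∈ r}, μ {y | (w, y) ∈ R}
          ≤ ∏ _j : {i : Fin N // ¬ i ∈ r}, (1 - ENNReal.ofReal F) :=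
            Finset.prod_le_prod' fun j _ => hslice w
      _ = (1 - ENNReal.ofReal F) ^ (N - k) := by
          rw [Finset.prod_const, Finset.card_univ, hcard]
    refine le_trans (lintegral_mono hsl) ?_
    rw [lintegral_const, measure_univ, mul_one]
  · intro z hzΩ hzd
    have hrange : (Set.range fun i : {i : Fin N // i ∈ r} => Φ (z (i : Fin N)))
        = (fun i => Φ (z i)) '' (r : Set (Fin N)) := by
      ext q; constructor
      · rintro ⟨⟨i, hi⟩, rfl⟩; exact ⟨i, hi, rfl⟩
      · rintro ⟨i, hi, rfl⟩; exact ⟨⟨i, hi⟩, rfl⟩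
    intro j
    have hmemS : ((fun i : {i : Fin N // i ∈ r} => z (i : Fin N)), z (j : Fin N)) ∈ S :=
      ⟨fun i _ => hzΩ _, hzΩ _⟩
    have hlt : Metric.infDist (Φ (z (j : Fin N)))
        ((L (fun i : {i : Fin N // i ∈ r} => z (i : Fin N)) : Submodule ℝ H) : Set H) < C := by
      rw [hL]
      simp only []
      rw [hrange]
      exact hzd j
    exact ⟨(hVS _ hmemS).mpr hlt, hmemS⟩


set_option maxHeartbeats 2000000 in
theorem greedy_underestimate_prob {d : ℕ} {H : Type*}
    [NormedAddCommGroup H] [InnerProductSpace ℝ H]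
    (Ω : Set (EuclideanSpace ℝ (Fin d))) (hΩ : IsCompact Ω) (hne : Ω.Nonempty)
    (Φ : EuclideanSpace ℝ (Fin d) → H) (hΦ : ContinuousOn Φ Ω)
    (μ : Measure (EuclideanSpace ℝ (Fin d))) [IsProbabilityMeasure μ] (hμΩ : μ Ωᶜ = 0)
    (hnd : ∀ n : ℕ, ∀ hn : 3 ≤ n,
      Measure.pi (fun _ : Fin n => μ)
        {p : Fin n → EuclideanSpace ℝ (Fin d) |
          Sconv Φ (fun v : Fin (n - 2) => p ⟨v.1 + 2, by have := v.2; omega⟩)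
              (p ⟨0, by omega⟩) =
            Sconv Φ (fun v : Fin (n - 2) => p ⟨v.1 + 2, by have := v.2; omega⟩)
              (p ⟨1, by omega⟩)} = 0)
    (N t : ℕ) (ht : 1 ≤ t) (htN : t ≤ N) (ε : ℝ) (hε : 0 < ε) :
    Measure.pi (fun _ : Fin N => μ)
      {z : Fin N → EuclideanSpace ℝ (Fin d) |
        ∃ idx : Fin t → Fin N, Function.Injective idx ∧
          (∀ u : ℕ, ∀ hu : u < t,
            IsUnit (gramM Φ (fun v : Fin u => z (idx ⟨v.1, v.2.trans hu⟩))).det) ∧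
          (∀ u : Fin t, ∀ j : Fin N,
            Sconv Φ (fun v : Fin u.1 => z (idx ⟨v.1, v.2.trans u.2⟩)) (z j) ≤
              Sconv Φ (fun v : Fin u.1 => z (idx ⟨v.1, v.2.trans u.2⟩)) (z (idx u))) ∧
          Real.sqrt (Sconv Φ
              (fun v : Fin (t - 1) => z (idx ⟨v.1, lt_of_lt_of_le v.2 (Nat.sub_le t 1)⟩))
              (z (idx ⟨t - 1, Nat.sub_lt ht Nat.one_pos⟩)))
            < kolmWidth Ω Φ (t - 1) - ε} ≤
      ENNReal.ofReal ((N.choose t : ℝ) *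
        Real.exp (-(⨅ x : Ω,
            (μ {y | y ∈ Ω ∧ ‖Φ (x : EuclideanSpace ℝ (Fin d)) - Φ y‖ ≤ ε}).toReal) *
          ((N : ℝ) - t))) := by
  classical
  have hΩm : MeasurableSet Ω := hΩ.isClosed.measurableSet
  haveI : Nonempty Ω := hne.to_subtype
  set F := ⨅ x : Ω, (μ {y | y ∈ Ω ∧ ‖Φ (x : EuclideanSpace ℝ (Fin d)) - Φ y‖ ≤ ε}).toReal
    with hFdef
  have hF0 : 0 ≤ F := le_ciInf fun x => ENNReal.toReal_nonneg
  have hF1 : F ≤ 1 := by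
    obtain ⟨x0, hx0⟩ := hne
    have hbb : BddBelow (Set.range fun x : Ω =>
        (μ {y | y ∈ Ω ∧ ‖Φ (x : EuclideanSpace ℝ (Fin d)) - Φ y‖ ≤ ε}).toReal) := by
      refine ⟨0, ?_⟩; rintro _ ⟨x, rfl⟩; exact ENNReal.toReal_nonneg
    have h1 : F ≤ (μ {y | y ∈ Ω ∧ ‖Φ x0 - Φ y‖ ≤ ε}).toReal := ciInf_le hbb (⟨x0, hx0⟩ : Ω)
    refine h1.trans ?_
    have h2 : μ {y | y ∈ Ω ∧ ‖Φ x0 - Φ y‖ ≤ ε} ≤ 1 := prob_le_one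
    calc (μ {y | y ∈ Ω ∧ ‖Φ x0 - Φ y‖ ≤ ε}).toReal ≤ (1 : ℝ≥0∞).toReal :=
          ENNReal.toReal_mono (by simp) h2
    _ = 1 := by simp
  have hcast : ((N : ℝ) - t) = ((N - t : ℕ) : ℝ) := by
    rw [Nat.cast_sub htN]
  by_cases hcase : 2 * t ≤ N + 1
  · -- main case: union bound over subsets of size t - 1
    set Ev := {z : Fin N → EuclideanSpace ℝ (Fin d) |
        ∃ idx : Fin t → Fin N, Function.Injective idx ∧
          (∀ u : ℕ, ∀ hu : u < t,
            IsUnit (gramM Φ (fun v : Fin u => z (idx ⟨v.1, v.2.trans hu⟩))).det) ∧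
          (∀ u : Fin t, ∀ j : Fin N,
            Sconv Φ (fun v : Fin u.1 => z (idx ⟨v.1, v.2.trans u.2⟩)) (z j) ≤
              Sconv Φ (fun v : Fin u.1 => z (idx ⟨v.1, v.2.trans u.2⟩)) (z (idx u))) ∧
          Real.sqrt (Sconv Φ
              (fun v : Fin (t - 1) => z (idx ⟨v.1, lt_of_lt_of_le v.2 (Nat.sub_le t 1)⟩))
              (z (idx ⟨t - 1, Nat.sub_lt ht Nat.one_pos⟩)))
            < kolmWidth Ω Φ (t - 1) - ε} with hEv
    have key := fun (r : Finset (Fin N)) (hr : r.card = t - 1) =>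
      keyLemma Ω hΩ hne Φ hΦ μ (t - 1) ε (kolmWidth Ω Φ (t - 1) - ε) (by linarith) N r hr
    choose M hMmeas hMbound hMmem using key
    set Bad := {z : Fin N → EuclideanSpace ℝ (Fin d) | ¬ ∀ j, z j ∈ Ω} with hBad
    have hBad0 : Measure.pi (fun _ : Fin N => μ) Bad = 0 := by
      have hsub : Bad ⊆ ⋃ j : Fin N, (fun z : Fin N → EuclideanSpace ℝ (Fin d) => z j) ⁻¹' Ωᶜ := by
        intro z hz
        rw [hBad] at hz
        push_neg at hz
        obtain ⟨j, hj⟩ := hz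
        exact Set.mem_iUnion.mpr ⟨j, hj⟩
      refine measure_mono_null hsub (measure_iUnion_null fun j => ?_)
      exact Measure.pi_eval_preimage_null (μ := fun _ : Fin N => μ) (i := j) hμΩ
    -- inclusion
    have hincl : Ev ⊆ Bad ∪ ⋃ r ∈ Finset.powersetCard (t - 1) (Finset.univ : Finset (Fin N)),
        ⋃ (hr : r.card = t - 1), M r hr := by
      intro z hz
      obtain ⟨idx, hinj, hi, hii, hiii⟩ := hz
      by_cases hzΩ : ∀ j, z j ∈ Ω
      · right
        -- the prefix
        have hklt : t - 1 < t := Nat.sub_lt ht Nat.one_pos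
        set g : Fin (t - 1) → Fin N := fun v => idx ⟨v.1, v.2.trans hklt⟩ with hg
        have hginj : Function.Injective g := by
          intro a b hab
          have h := hinj hab
          have hval : a.1 = b.1 := by simpa [Fin.mk.injEq] using h
          exact Fin.ext hval
        set r : Finset (Fin N) := Finset.image g Finset.univ with hrdef
        have hr : r.card = t - 1 := by
          rw [hrdef, Finset.card_image_of_injective _ hginj, Finset.card_univ, Fintype.card_fin]
        have hrmem : r ∈ Finset.powersetCard (t - 1) (Finset.univ : Finset (Fin N)) := by
          rw [Finset.mem_powersetCard]
          exact ⟨Finset.subset_univ _, hr⟩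
        have hdet : IsUnit (gramM Φ (fun v : Fin (t - 1) => z (g v))).det := hi (t - 1) hklt
        have himg : (fun i => Φ (z i)) '' (r : Set (Fin N))
            = Set.range fun v : Fin (t - 1) => Φ (z (g v)) := by
          rw [hrdef, Finset.coe_image, Finset.coe_univ, Set.image_univ, ← Set.range_comp]
          rfl
        have hdists : ∀ j : Fin N, Metric.infDist (Φ (z j))
            ((Submodule.span ℝ ((fun i => Φ (z i)) '' (r : Set (Fin N)))
              : Submodule ℝ H) : Set H) < kolmWidth Ω Φ (t - 1) - ε := by
          intro j
          rw [himg]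
          have step1 : Metric.infDist (Φ (z j))
              ((Submodule.span ℝ (Set.range fun v : Fin (t - 1) => Φ (z (g v)))
                : Submodule ℝ H) : Set H)
              ≤ Real.sqrt (Sconv Φ (fun v : Fin (t - 1) => z (g v)) (z j)) :=
            infDist_le_sqrt_sconv Φ (fun v : Fin (t - 1) => z (g v)) hdet (z j)
          have step2 : Sconv Φ (fun v : Fin (t - 1) => z (g v)) (z j)
              ≤ Sconv Φ (fun v : Fin (t - 1) => z (g v)) (z (idx ⟨t - 1, hklt⟩)) :=
            hii ⟨t - 1, hklt⟩ j
          have step3 : Real.sqrt (Sconv Φ (fun v : Fin (t - 1) => z (g v))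
              (z (idx ⟨t - 1, hklt⟩))) < kolmWidth Ω Φ (t - 1) - ε := hiii
          calc Metric.infDist (Φ (z j)) _
              ≤ Real.sqrt (Sconv Φ (fun v : Fin (t - 1) => z (g v)) (z j)) := step1
          _ ≤ Real.sqrt (Sconv Φ (fun v : Fin (t - 1) => z (g v)) (z (idx ⟨t - 1, hklt⟩))) :=
              Real.sqrt_le_sqrt step2
          _ < kolmWidth Ω Φ (t - 1) - ε := step3
        refine Set.mem_biUnion hrmem ?_
        exact Set.mem_iUnion.mpr ⟨hr, hMmem r hr z hzΩ hdists⟩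
      · left; exact hzΩ
    -- measure bound
    have hmeas_le : Measure.pi (fun _ : Fin N => μ) Ev
        ≤ (N.choose (t - 1) : ℝ≥0∞) * (1 - ENNReal.ofReal F) ^ (N - (t - 1)) := by
      refine le_trans (measure_mono hincl) ?_
      refine le_trans (measure_union_le _ _) ?_
      rw [hBad0, zero_add]
      refine le_trans (measure_biUnion_finset_le _ _) ?_
      have hbound : ∀ r ∈ Finset.powersetCard (t - 1) (Finset.univ : Finset (Fin N)),
          Measure.pi (fun _ : Fin N => μ) (⋃ (hr : r.card = t - 1), M r hr)
            ≤ (1 - ENNReal.ofReal F) ^ (N - (t - 1)) := by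
        intro r hrmem
        have hr : r.card = t - 1 := (Finset.mem_powersetCard.mp hrmem).2
        have : (⋃ (hr' : r.card = t - 1), M r hr') = M r hr := by
          ext x
          rw [Set.mem_iUnion]
          exact ⟨fun ⟨h', hx⟩ => hx, fun hx => ⟨hr, hx⟩⟩
        rw [this]
        exact hMbound r hr
      refine le_trans (Finset.sum_le_card_nsmul _ _ _ hbound) ?_
      rw [Finset.card_powersetCard, Finset.card_univ, Fintype.card_fin, nsmul_eq_mul]
    refine le_trans hmeas_le ?_
    -- numeric comparison
    have hchoose : N.choose (t - 1) ≤ N.choose t := by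
      rcases Nat.lt_or_ge (2 * t) (N + 1) with hlt | hge
      · have h2t : 2 * t ≤ N := by omega
        have hhalf : t - 1 < N / 2 := by
          have : t ≤ N / 2 := Nat.le_div_iff_mul_le (by omega) |>.mpr (by omega)
          omega
        have := Nat.choose_le_succ_of_lt_half_left hhalf
        have he : t - 1 + 1 = t := by omega
        rwa [he] at this
      · have h2t : 2 * t = N + 1 := by omega
        have hsymm : N.choose (N - (t - 1)) = N.choose (t - 1) :=
          Nat.choose_symm (by omega)
        have he : N - (t - 1) = t := by omega
        rw [he] at hsymm
        exact le_of_eq hsymm.symm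
    have hsub1 : (1 : ℝ≥0∞) - ENNReal.ofReal F = ENNReal.ofReal (1 - F) := by
      rw [ENNReal.ofReal_sub 1 hF0, ENNReal.ofReal_one]
    have hpow : ((1 : ℝ≥0∞) - ENNReal.ofReal F) ^ (N - (t - 1))
        ≤ ENNReal.ofReal (Real.exp (-F * ((N : ℝ) - t))) := by
      rw [hsub1, ← ENNReal.ofReal_pow (by linarith)]
      refine ENNReal.ofReal_le_ofReal ?_
      have e1 : (1 - F) ^ (N - (t - 1)) ≤ (1 - F) ^ (N - t) :=
        pow_le_pow_of_le_one (by linarith) (by linarith) (by omega)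
      have e2 : (1 - F) ^ (N - t) ≤ Real.exp (-F) ^ (N - t) := by
        refine pow_le_pow_left₀ (by linarith) ?_ _
        have := Real.add_one_le_exp (-F)
        linarith
      have e3 : Real.exp (-F) ^ (N - t) = Real.exp (-F * ((N : ℝ) - t)) := by
        rw [← Real.exp_nat_mul, hcast]
        ring_nf
      calc (1 - F) ^ (N - (t - 1)) ≤ (1 - F) ^ (N - t) := e1
      _ ≤ Real.exp (-F) ^ (N - t) := e2
      _ = Real.exp (-F * ((N : ℝ) - t)) := e3
    calc (N.choose (t - 1) : ℝ≥0∞) * (1 - ENNReal.ofReal F) ^ (N - (t - 1))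
        ≤ (N.choose t : ℝ≥0∞) * ENNReal.ofReal (Real.exp (-F * ((N : ℝ) - t))) := by
          exact mul_le_mul' (by exact_mod_cast Nat.cast_le.mpr hchoose) hpow
    _ = ENNReal.ofReal ((N.choose t : ℝ) * Real.exp (-F * ((N : ℝ) - t))) := by
        rw [ENNReal.ofReal_mul (by positivity), ENNReal.ofReal_natCast]
  · -- trivial case : RHS is at least one
    refine le_trans prob_le_one ?_
    rw [ENNReal.one_le_ofReal]
    set j := N - t with hj
    have hjN : 2 * j + 2 ≤ N := by omega
    have h3 : (3 : ℝ) ^ j ≤ (N.choose t : ℝ) := by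
      have h1 := three_pow_le_choose j
      have h2 : Nat.choose (2 * j + 2) j ≤ Nat.choose N j := Nat.choose_le_choose j hjN
      have h5 : Nat.choose N j = Nat.choose N t := by
        rw [hj, Nat.choose_symm htN]
      have := (h1.trans h2).trans_eq h5
      exact_mod_cast this
    have hexp : Real.exp (F * ((N : ℝ) - t)) ≤ (N.choose t : ℝ) := by
      rw [hcast]
      calc Real.exp (F * (j : ℝ)) ≤ Real.exp ((j : ℝ)) := by
            refine Real.exp_le_exp.mpr ?_
            nlinarith [Nat.cast_nonneg (α := ℝ) j]
      _ = Real.exp 1 ^ j := by rw [← Real.exp_nat_mul]; ring_nf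
      _ ≤ 3 ^ j := by
            refine pow_le_pow_left₀ (le_of_lt (Real.exp_pos 1)) ?_ j
            have := Real.exp_one_lt_d9
            linarith
      _ ≤ (N.choose t : ℝ) := h3
    have hne' : -F * ((N : ℝ) - t) = -(F * ((N : ℝ) - t)) := by ring
    rw [hne', Real.exp_neg]
    have h1 : (1 : ℝ) = Real.exp (F * ((N : ℝ) - t)) * (Real.exp (F * ((N : ℝ) - t)))⁻¹ := by
      field_simp
    calc (1 : ℝ) = Real.exp (F * ((N : ℝ) - t)) * (Real.exp (F * ((N : ℝ) - t)))⁻¹ := h1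
    _ ≤ (N.choose t : ℝ) * (Real.exp (F * ((N : ℝ) - t)))⁻¹ := by
        refine mul_le_mul_of_nonneg_right hexp ?_
        positivity

end
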